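/- Let P be a symmetric convex 2n-gon with dual Q, and let X ∈ ℝ² be any nonzero vector. Then u_i = [X, Q_i] defines an eigenvector of the double evolute transform T_P with eigenvalue 1: -β_i ∇_i(α Δu) = u_i for all i. -/
import Mathlib


/-- Determinant of the 2×2 matrix with columns `v` and `w`. -/
noncomputable def det2 (v w : ℝ × ℝ) : ℝ := v.1 * w.2 - v.2 * w.1

lemma det2_para {v w : ℝ × ℝ} (h : det2 v w = 0) (hw : w ≠ 0) : ∃ c : ℝ, v = c • w := by
  simp only [det2] at h
  rcases eq_or_ne w.1 0 with h1 | h1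
  · have h2 : w.2 ≠ 0 := fun h2 => hw (Prod.ext h1 h2)
    refine ⟨v.2 / w.2, Prod.ext ?_ ?_⟩
    · simp only [Prod.smul_fst, smul_eq_mul, h1, mul_zero]
      rw [h1, mul_zero, sub_zero] at h
      exact (mul_eq_zero.mp h).resolve_right h2
    · simp only [Prod.smul_snd, smul_eq_mul]
      field_simp
  · refine ⟨v.1 / w.1, Prod.ext ?_ ?_⟩
    · simp only [Prod.smul_fst, smul_eq_mul]
      field_simp
    · simp only [Prod.smul_snd, smul_eq_mul]
      field_simp
      linear_combination -h

theorem stmt_13 (n : ℕ) (hn : 0 < n) (P Q : ℤ → ℝ × ℝ) (α β u : ℤ → ℝ) (X : ℝ × ℝ)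
    (hper : ∀ i, P (i + 2 * n) = P i)
    (hconv : ∀ i, 0 < det2 (P i) (P (i + 1)))
    (hloc : ∀ i, 0 < det2 (P i - P (i - 1)) (P (i + 1) - P i))
    (hsym : ∀ i, P (i + n) = -P i)
    (hβ : ∀ i, β i = (det2 (P i) (P (i + 1)))⁻¹)
    (hQ : ∀ i, Q i = β i • (P (i + 1) - P i))
    (hα : ∀ i, α i = (det2 (Q i) (Q (i + 1)))⁻¹)
    (hX : X ≠ 0)
    (hu : ∀ i, u i = det2 X (Q i)) :
    ∀ i, -(β i) * (α i * (u (i + 1) - u i) - α (i - 1) * (u i - u (i - 1))) = u i := by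
  have hd : ∀ j : ℤ, det2 (P j) (P (j + 1)) ≠ 0 := fun j => ne_of_gt (hconv j)
  -- det2 (Q j) (P (j+1)) = -1
  have hQP : ∀ j : ℤ, det2 (Q j) (P (j + 1)) = -1 := by
    intro j
    have h := hd j
    simp only [hQ, hβ, det2, Prod.smul_fst, Prod.smul_snd, smul_eq_mul,
      Prod.fst_sub, Prod.snd_sub] at *
    field_simp
    ring
  -- det2 (Q (j+1)) (P (j+1)) = -1
  have hQP' : ∀ j : ℤ, det2 (Q (j + 1)) (P (j + 1)) = -1 := by
    intro j
    have h := hd (j + 1)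
    simp only [hQ, hβ, det2, Prod.smul_fst, Prod.smul_snd, smul_eq_mul,
      Prod.fst_sub, Prod.snd_sub] at *
    field_simp
    ring
  -- β positive
  have hβpos : ∀ j : ℤ, 0 < β j := by
    intro j
    rw [hβ]
    exact inv_pos.mpr (hconv j)
  -- det2 (Q j) (Q (j+1)) > 0
  have hQQ : ∀ j : ℤ, 0 < det2 (Q j) (Q (j + 1)) := by
    intro j
    have h1 := hloc (j + 1)
    have h2 : (j : ℤ) + 1 - 1 = j := by ring
    rw [h2] at h1
    have h3 : det2 (Q j) (Q (j + 1))
        = β j * β (j + 1) * det2 (P (j + 1) - P j) (P (j + 1 + 1) - P (j + 1)) := by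
      simp only [hQ, det2, Prod.smul_fst, Prod.smul_snd, smul_eq_mul,
        Prod.fst_sub, Prod.snd_sub]
      ring
    rw [h3]
    exact mul_pos (mul_pos (hβpos j) (hβpos (j + 1))) h1
  -- P (j+1) ≠ 0
  have hPne : ∀ j : ℤ, P (j + 1) ≠ 0 := by
    intro j h
    apply hd j
    simp [det2, h]
  -- key identity: α j * (u (j+1) - u j) = - det2 X (P (j+1))
  have hkey : ∀ j : ℤ, α j * (u (j + 1) - u j) = -det2 X (P (j + 1)) := by
    intro j
    have hpar : det2 (Q (j + 1) - Q j) (P (j + 1)) = 0 := by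
      have h1 := hQP j
      have h2 := hQP' j
      simp only [det2, Prod.fst_sub, Prod.snd_sub] at *
      linarith
    obtain ⟨c, hc⟩ := det2_para hpar (hPne j)
    have hQc : Q (j + 1) = Q j + c • P (j + 1) := by
      rw [← hc]; abel
    have hdet : det2 (Q j) (Q (j + 1)) = -c := by
      rw [hQc]
      have := hQP j
      simp only [det2, Prod.fst_add, Prod.snd_add, Prod.smul_fst, Prod.smul_snd,
        smul_eq_mul] at *
      linear_combination c * this
    have hcne : c ≠ 0 := by
      intro h
      have := hQQ j
      rw [hdet, h] at this
      norm_num at this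
    have hα' : α j = (-c)⁻¹ := by rw [hα, hdet]
    have hu' : u (j + 1) - u j = c * det2 X (P (j + 1)) := by
      rw [hu, hu, hQc]
      simp only [det2, Prod.fst_add, Prod.snd_add, Prod.smul_fst, Prod.smul_snd,
        smul_eq_mul]
      ring
    rw [hα', hu', inv_neg, neg_mul, inv_mul_cancel_left₀ hcne]
  intro i
  have h1 := hkey i
  have h2 := hkey (i - 1)
  have h3 : (i : ℤ) - 1 + 1 = i := by ring
  rw [h3] at h2
  rw [h1, h2, hu, hQ, hβ]
  have h := hd i
  simp only [det2, Prod.smul_fst, Prod.smul_snd, smul_eq_mul, Prod.fst_sub, Prod.snd_sub] at *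
  field_simp
  ring
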